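/- The kernel of the action homomorphism π: O(p,∞) → Isom(X_p(ℝ)) is {±Id}. -/

import Mathlib

open scoped RealInnerProductSpace

/-- The kernel of the action homomorphism `O(p,∞) → Isom(X_p(ℝ))` is `{±Id}`:
`g ∈ O(p,∞)` fixes every `p`-dimensional subspace on which `B_p` is positive
definite if and only if `g = Id` or `g = -Id`. -/
theorem stmt11 {H : Type*} [NormedAddCommGroup H] [InnerProductSpace ℝ H]
    [CompleteSpace H] [TopologicalSpace.SeparableSpace H]
    (hinf : ¬ FiniteDimensional ℝ H)
    (p : ℕ) (hp : 0 < p) (E₀ : Submodule ℝ H) (hE₀ : Module.finrank ℝ E₀ = p)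
    (Φ : H →L[ℝ] H)
    (hΦ₁ : ∀ v ∈ E₀, Φ v = v) (hΦ₂ : ∀ v ∈ E₀ᗮ, Φ v = -v)
    (g : H ≃L[ℝ] H)
    (hO : ∀ u v : H, ⟪g u, Φ (g v)⟫ = ⟪u, Φ v⟫) :
    (∀ E : Submodule ℝ H, Module.finrank ℝ E = p →
      (∀ v ∈ E, v ≠ 0 → 0 < ⟪v, Φ v⟫) → E.map (g : H →ₗ[ℝ] H) = E) ↔
    ((∀ v : H, g v = v) ∨ (∀ v : H, g v = -v)) := by
  constructor
  · intro hfix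
    haveI hfd : FiniteDimensional ℝ E₀ := FiniteDimensional.of_finrank_pos (hE₀ ▸ hp)
    -- decomposition of any vector
    have decomp : ∀ v : H, ∃ a ∈ E₀, ∃ b ∈ E₀ᗮ, v = a + b := by
      intro v
      refine ⟨E₀.orthogonalProjection v, (E₀.orthogonalProjection v).2,
        v - E₀.orthogonalProjection v, E₀.sub_starProjection_mem_orthogonal v, by abel⟩
    -- g fixes E₀
    have hgE₀ : E₀.map (g : H →ₗ[ℝ] H) = E₀ := by
      refine hfix E₀ hE₀ (fun v hv hv0 => ?_)
      rw [hΦ₁ v hv, real_inner_self_eq_norm_sq]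
      have : 0 < ‖v‖ := norm_pos_iff.mpr hv0
      positivity
    have hg₀ : ∀ x ∈ E₀, g x ∈ E₀ := by
      intro x hx
      rw [← hgE₀]
      exact Submodule.mem_map_of_mem hx
    -- membership in E₀ ∩ E₀ᗮ forces zero
    have hdisj : ∀ w : H, w ∈ E₀ → w ∈ E₀ᗮ → w = 0 := by
      intro w hw hw'
      have := Submodule.inner_right_of_mem_orthogonal hw hw'
      exact inner_self_eq_zero.mp this
    -- g maps E₀ᗮ into E₀ᗮ
    have hg₁ : ∀ f ∈ E₀ᗮ, g f ∈ E₀ᗮ := by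
      intro f hf
      obtain ⟨a, ha, b, hb, hab⟩ := decomp (g f)
      have hΦ : Φ (g f) = a - b := by
        rw [hab, map_add, hΦ₁ a ha, hΦ₂ b hb]; abel
      have hz : ∀ u ∈ E₀, ⟪u, a⟫ = 0 := by
        intro u hu
        obtain ⟨u', hu', rfl⟩ := by
          rw [← hgE₀] at hu; exact (Submodule.mem_map.mp hu)
        have hgu' : g u' ∈ E₀ := hg₀ u' hu'
        have h1 : ⟪g u', Φ (g f)⟫ = ⟪u', Φ f⟫ := hO u' f
        rw [hΦ₂ f hf, inner_neg_right,
          Submodule.inner_right_of_mem_orthogonal hu' hf, neg_zero, hΦ,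
          inner_sub_right, Submodule.inner_right_of_mem_orthogonal hgu' hb] at h1
        simpa using h1
      have : a = 0 := inner_self_eq_zero.mp (hz a ha)
      rw [hab, this, zero_add]; exact hb
    -- existence of a nonzero vector in E₀ᗮ
    obtain ⟨f₀, hf₀, hf₀0⟩ : ∃ f ∈ E₀ᗮ, f ≠ 0 := by
      by_contra h
      push_neg at h
      have hE₀top : E₀ = ⊤ := by
        rw [Submodule.eq_top_iff']
        intro v
        obtain ⟨a, ha, b, hb, rfl⟩ := decomp v
        rw [h b hb, add_zero]; exact ha
      apply hinf
      haveI : FiniteDimensional ℝ (⊤ : Submodule ℝ H) := hE₀top ▸ hfd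
      exact Module.Finite.equiv (Submodule.topEquiv (R := ℝ) (M := H))
    -- existence of a nonzero vector in E₀
    obtain ⟨x₁, hx₁, hx₁0⟩ : ∃ x ∈ E₀, x ≠ 0 := by
      have : E₀ ≠ ⊥ := by
        intro h
        rw [h, finrank_bot] at hE₀
        omega
      exact Submodule.exists_mem_ne_zero_of_ne_bot this
    -- the key identity
    have key : ∀ x₀ ∈ E₀, ‖x₀‖ = 1 → ∀ f ∈ E₀ᗮ, ∀ x ∈ E₀,
        ⟪x₀, x⟫ • (g f : H) = ⟪x₀, g x⟫ • f := by
      intro x₀ hx₀ hx₀n f hf x hx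
      set c : ℝ := (‖f‖ + 1)⁻¹ with hc
      have hcpos : 0 < c := by positivity
      have hcf : c * ‖f‖ < 1 := by
        rw [hc, inv_mul_lt_iff₀ (by positivity)]
        linarith [norm_nonneg f]
      have hx₀f : ⟪x₀, f⟫ = 0 := Submodule.inner_right_of_mem_orthogonal hx₀ hf
      -- the deformation map
      let L : H ≃ₗ[ℝ] H :=
        { toFun := fun y => y + (c * ⟪x₀, y⟫) • f
          invFun := fun y => y - (c * ⟪x₀, y⟫) • f
          map_add' := by
            intro a b
            show (a + b) + (c * ⟪x₀, a + b⟫) • f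
              = (a + (c * ⟪x₀, a⟫) • f) + (b + (c * ⟪x₀, b⟫) • f)
            rw [inner_add_right]
            module
          map_smul' := by
            intro r a
            show (r • a) + (c * ⟪x₀, r • a⟫) • f = r • (a + (c * ⟪x₀, a⟫) • f)
            rw [real_inner_smul_right]
            module
          left_inv := by
            intro a
            show (a + (c * ⟪x₀, a⟫) • f) - (c * ⟪x₀, a + (c * ⟪x₀, a⟫) • f⟫) • f = a
            rw [inner_add_right, real_inner_smul_right, hx₀f, mul_zero, add_zero]
            module
          right_inv := by
            intro a
            show (a - (c * ⟪x₀, a⟫) • f) + (c * ⟪x₀, a - (c * ⟪x₀, a⟫) • f⟫) • f = a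
            rw [inner_sub_right, real_inner_smul_right, hx₀f, mul_zero, sub_zero]
            module }
      set E : Submodule ℝ H := E₀.map (L : H →ₗ[ℝ] H) with hEdef
      have hErk : Module.finrank ℝ E = p := by
        rw [hEdef, LinearEquiv.finrank_map_eq]; exact hE₀
      have hEpos : ∀ v ∈ E, v ≠ 0 → 0 < ⟪v, Φ v⟫ := by
        intro v hv hv0
        obtain ⟨y, hy, rfl⟩ := Submodule.mem_map.mp hv
        have hy0 : y ≠ 0 := by
          rintro rfl
          exact hv0 (map_zero (L : H →ₗ[ℝ] H))
        have hyf : ⟪y, f⟫ = 0 := Submodule.inner_right_of_mem_orthogonal hy hf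
        have hΦv : Φ ((L : H →ₗ[ℝ] H) y) = y - (c * ⟪x₀, y⟫) • f := by
          show Φ (y + (c * ⟪x₀, y⟫) • f) = _
          rw [map_add, map_smul, hΦ₁ y hy, hΦ₂ f hf]
          module
        show (0:ℝ) < ⟪(L : H →ₗ[ℝ] H) y, Φ ((L : H →ₗ[ℝ] H) y)⟫
        rw [hΦv]
        have hval : ⟪y + (c * ⟪x₀, y⟫) • f, y - (c * ⟪x₀, y⟫) • f⟫
            = ⟪y, y⟫ - (c * ⟪x₀, y⟫)^2 * ⟪f, f⟫ := by
          simp only [inner_add_left, inner_sub_left, inner_sub_right, inner_add_right,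
            real_inner_smul_left, real_inner_smul_right, hyf]
          have hfy : ⟪f, y⟫ = 0 := by rw [← real_inner_comm]; exact hyf
          rw [hfy]
          ring
        show (0:ℝ) < ⟪y + (c * ⟪x₀, y⟫) • f, y - (c * ⟪x₀, y⟫) • f⟫
        rw [hval]
        have hCS : |⟪x₀, y⟫| ≤ ‖y‖ := by
          have := abs_real_inner_le_norm x₀ y
          rwa [hx₀n, one_mul] at this
        rw [real_inner_self_eq_norm_sq, real_inner_self_eq_norm_sq]
        have h2 : ⟪x₀, y⟫^2 ≤ ‖y‖^2 := by
          nlinarith [abs_nonneg ⟪x₀, y⟫, sq_abs ⟪x₀, y⟫, norm_nonneg y]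
        have h3 : (c * ‖f‖)^2 < 1 := by
          have h5 : (0:ℝ) ≤ c * ‖f‖ := mul_nonneg hcpos.le (norm_nonneg f)
          nlinarith
        have h4 : (0:ℝ) < ‖y‖^2 := by
          have : 0 < ‖y‖ := norm_pos_iff.mpr hy0
          positivity
        nlinarith [sq_nonneg ⟪x₀, y⟫, sq_nonneg (c * ⟪x₀, y⟫ * ‖f‖), sq_nonneg c,
          sq_nonneg ‖f‖]
      have hEfix := hfix E hErk hEpos
      -- g (L x) ∈ E
      have hmem : (g : H →ₗ[ℝ] H) ((L : H →ₗ[ℝ] H) x) ∈ E := by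
        rw [← hEfix]
        exact Submodule.mem_map_of_mem (Submodule.mem_map_of_mem hx)
      obtain ⟨y, hy, hyeq⟩ := Submodule.mem_map.mp hmem
      have hyeq' : g x + (c * ⟪x₀, x⟫) • (g f) = y + (c * ⟪x₀, y⟫) • f := by
        have h2 : (g : H →ₗ[ℝ] H) ((L : H →ₗ[ℝ] H) x)
            = g x + (c * ⟪x₀, x⟫) • (g f) := by
          show (g : H →ₗ[ℝ] H) (x + (c * ⟪x₀, x⟫) • f) = _
          rw [map_add, map_smul]
          rfl
        rw [← h2, ← hyeq]
        rfl
      have hsep : g x - y = (c * ⟪x₀, y⟫) • f - (c * ⟪x₀, x⟫) • (g f) := by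
        rw [← sub_eq_zero] at hyeq' ⊢
        rw [← hyeq']; abel
      have hgxy : g x = y := by
        have hl : g x - y ∈ E₀ := Submodule.sub_mem _ (hg₀ x hx) hy
        have hr : g x - y ∈ E₀ᗮ := by
          rw [hsep]
          exact Submodule.sub_mem _ (Submodule.smul_mem _ _ hf)
            (Submodule.smul_mem _ _ (hg₁ f hf))
        have := hdisj _ hl hr
        rwa [sub_eq_zero] at this
      have hfin : (c * ⟪x₀, x⟫) • (g f : H) = (c * ⟪x₀, g x⟫) • f := by
        rw [hgxy]
        have h := hsep
        rw [hgxy, sub_self] at h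
        exact (sub_eq_zero.mp h.symm).symm
      have hc' : c • (⟪x₀, x⟫ • (g f : H)) = c • (⟪x₀, g x⟫ • f) := by
        rw [smul_smul, smul_smul]
        exact hfin
      exact smul_right_injective H (ne_of_gt hcpos) hc'
    -- normalize x₁
    set x₀ : H := ‖x₁‖⁻¹ • x₁ with hx₀def
    have hx₀mem : x₀ ∈ E₀ := Submodule.smul_mem _ _ hx₁
    have hx₀n : ‖x₀‖ = 1 := norm_smul_inv_norm hx₁0
    set lam : ℝ := ⟪x₀, g x₀⟫ with hlam
    -- g f = lam • f for f ∈ E₀ᗮ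
    have hgf : ∀ f ∈ E₀ᗮ, g f = lam • f := by
      intro f hf
      have h1 := key x₀ hx₀mem hx₀n f hf x₀ hx₀mem
      rw [real_inner_self_eq_norm_sq, hx₀n] at h1
      simpa using h1
    -- every unit vector u in E₀ has ⟪u, g u⟫ = lam
    have hunit : ∀ u ∈ E₀, ‖u‖ = 1 → ⟪u, g u⟫ = lam := by
      intro u hu hun
      have h1 := key u hu hun f₀ hf₀ u hu
      rw [real_inner_self_eq_norm_sq, hun] at h1
      have h2 : g f₀ = ⟪u, g u⟫ • f₀ := by simpa using h1
      rw [hgf f₀ hf₀] at h2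
      have h3 := sub_eq_zero.mpr h2
      rw [← sub_smul] at h3
      rcases smul_eq_zero.mp h3 with h | h
      · have := sub_eq_zero.mp h
        linarith
      · exact absurd h hf₀0
    -- g x = lam • x on E₀
    have hgx : ∀ x ∈ E₀, g x = lam • x := by
      intro x hx
      have horth : ∀ u ∈ E₀, ⟪u, g x - lam • x⟫ = 0 := by
        intro u hu
        rcases eq_or_ne u 0 with rfl | hu0
        · simp
        · have hun : ‖(‖u‖⁻¹ • u : H)‖ = 1 := norm_smul_inv_norm hu0
          have humem : (‖u‖⁻¹ • u : H) ∈ E₀ := Submodule.smul_mem _ _ hu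
          have h1 := key _ humem hun f₀ hf₀ x hx
          rw [hgf f₀ hf₀, smul_smul] at h1
          have h3 : ⟪(‖u‖⁻¹ • u : H), x⟫ * lam = ⟪(‖u‖⁻¹ • u : H), g x⟫ := by
            have h4 := sub_eq_zero.mpr h1
            rw [← sub_smul] at h4
            rcases smul_eq_zero.mp h4 with h | h
            · exact sub_eq_zero.mp h
            · exact absurd h hf₀0
          have hnu : (‖u‖:ℝ) ≠ 0 := norm_ne_zero_iff.mpr hu0
          have h4 : ⟪u, x⟫ * lam = ⟪u, g x⟫ := by
            rw [real_inner_smul_left, real_inner_smul_left] at h3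
            have h5 : ‖u‖⁻¹ * (⟪u, x⟫ * lam) = ‖u‖⁻¹ * ⟪u, g x⟫ := by
              rw [← mul_assoc]; exact h3
            exact mul_left_cancel₀ (inv_ne_zero hnu) h5
          rw [inner_sub_right, real_inner_smul_right, ← h4, mul_comm, sub_self]
      have hmem : g x - lam • x ∈ E₀ :=
        Submodule.sub_mem _ (hg₀ x hx) (Submodule.smul_mem _ _ hx)
      have := horth _ hmem
      rw [inner_self_eq_zero] at this
      rwa [sub_eq_zero] at this
    -- lam = ±1
    have hlam2 : lam = 1 ∨ lam = -1 := by
      have h1 := hO x₀ x₀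
      rw [hΦ₁ x₀ hx₀mem, hΦ₁ _ (hg₀ x₀ hx₀mem)] at h1
      have h2 : g x₀ = lam • x₀ := hgx x₀ hx₀mem
      rw [h2, real_inner_smul_left, real_inner_smul_right,
        real_inner_self_eq_norm_sq, hx₀n] at h1
      have hsq : lam * lam = 1 := by
        have : lam * (lam * 1) = 1 := by simpa using h1
        simpa using this
      exact mul_self_eq_one_iff.mp hsq
    -- conclude
    have hall : ∀ v : H, g v = lam • v := by
      intro v
      obtain ⟨a, ha, b, hb, rfl⟩ := decomp v
      rw [map_add, hgx a ha, hgf b hb, smul_add]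
    rcases hlam2 with h | h
    · left; intro v; rw [hall v, h, one_smul]
    · right; intro v; rw [hall v, h, neg_smul, one_smul]
  · rintro (h | h) E _ _
    · have hg : (g : H →ₗ[ℝ] H) = LinearMap.id := by
        ext v; exact h v
      rw [hg, Submodule.map_id]
    · ext v
      simp only [Submodule.mem_map]
      constructor
      · rintro ⟨x, hx, rfl⟩
        show g x ∈ E
        rw [h x]
        exact E.neg_mem hx
      · intro hv
        exact ⟨-v, E.neg_mem hv, by show g (-v) = v; rw [h (-v)]; simp⟩
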